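/- Let α > 1 be irrational with convergents p_n/q_n and error function E(p) = p − qα (q nearest). If p is a positive integer with |E(p)| < |E(p_{n-1})| and p ≤ k·p_{n+1} for a positive integer k, then p = i·p_{n-1} + j·p_n for some non-negative integers i, j with i ≤ k. -/

import Mathlib

/-- `E α n` is the error `n - qα` where `qα` is the integer multiple of `α`
nearest to `n` (for `α > 1`, this multiple is `round (n/α) * α`). -/
noncomputable def E (α : ℝ) (n : ℕ) : ℝ := (n : ℝ) - round ((n : ℝ) / α) * α

/-- `A_α`: positive integers whose nearest multiple of `α` exceeds them. -/
def Aset (α : ℝ) : Set ℕ := {n | 0 < n ∧ E α n < 0}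

/-- `B_α`: positive integers whose nearest multiple of `α` is below them. -/
def Bset (α : ℝ) : Set ℕ := {n | 0 < n ∧ 0 < E α n}

/-- `S_α`: positive integers not expressible as a sum of two distinct elements
of `A_α` nor of two distinct elements of `B_α`. -/
def Sset (α : ℝ) : Set ℕ :=
  {s | 0 < s ∧ (∀ x ∈ Aset α, ∀ y ∈ Aset α, x ≠ y → x + y ≠ s) ∧
       (∀ x ∈ Bset α, ∀ y ∈ Bset α, x ≠ y → x + y ≠ s)}
/-- Data of the continued fraction expansion `α = [a 0; a 1, a 2, ...]` of an
irrational `α > 1`, with `t n` the successive complete quotients, and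
`p n / q n` the convergents. -/
structure CF (α : ℝ) where
  a : ℕ → ℕ
  t : ℕ → ℝ
  p : ℕ → ℕ
  q : ℕ → ℕ
  t0 : t 0 = α
  ha : ∀ n, 1 ≤ a n
  floor_t : ∀ n, (a n : ℝ) = ⌊t n⌋
  t_rec : ∀ n, t n = a n + 1 / t (n + 1)
  p0 : p 0 = a 0
  p1 : p 1 = a 1 * a 0 + 1
  p_rec : ∀ n, p (n + 2) = a (n + 2) * p (n + 1) + p n
  q0 : q 0 = 1
  q1 : q 1 = a 1
  q_rec : ∀ n, q (n + 2) = a (n + 2) * q (n + 1) + q n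

/-- The numerators extended by two initial terms: `P 0 = p_{-2} = 0`,
`P 1 = p_{-1} = 1`, and `P (n+2) = p n`. -/
def CF.P {α : ℝ} (c : CF α) : ℕ → ℕ
  | 0 => 0
  | 1 => 1
  | n + 2 => c.p n

namespace Stmt5Aux

variable {α : ℝ} (c : CF α)

/-- Extended denominators. -/
def Q : ℕ → ℕ
  | 0 => 1
  | 1 => 0
  | n + 2 => c.q n

lemma P_rec : ∀ m, c.P (m + 2) = c.a m * c.P (m + 1) + c.P m
  | 0 => by simp only [CF.P]; rw [c.p0]; ring
  | 1 => by simp only [CF.P]; rw [c.p1, c.p0]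
  | m + 2 => by simpa [CF.P] using c.p_rec m

lemma Q_rec : ∀ m, Q c (m + 2) = c.a m * Q c (m + 1) + Q c m
  | 0 => by simp only [Q]; rw [c.q0]; ring
  | 1 => by simp only [Q]; rw [c.q1, c.q0]; ring
  | m + 2 => by simpa [Q] using c.q_rec m

lemma t_ge_one (m : ℕ) : 1 ≤ c.t m := by
  have h := c.ha m
  calc (1:ℝ) ≤ (c.a m : ℝ) := by exact_mod_cast h
    _ = (⌊c.t m⌋ : ℝ) := c.floor_t m
    _ ≤ c.t m := Int.floor_le _

lemma t_pos (m : ℕ) : 0 < c.t m := lt_of_lt_of_le one_pos (t_ge_one c m)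

lemma t_gt_a (m : ℕ) : (c.a m : ℝ) < c.t m := by
  have h := c.t_rec m
  have h1 : 0 < 1 / c.t (m + 1) := one_div_pos.mpr (t_pos c (m + 1))
  linarith

lemma t_gt_one (m : ℕ) : 1 < c.t m := by
  have h1 : (1 : ℝ) ≤ (c.a m : ℝ) := by exact_mod_cast c.ha m
  linarith [t_gt_a c m]

lemma P_pos (m : ℕ) : 1 ≤ c.P (m + 1) := by
  induction m using Nat.twoStepInduction with
  | zero => simp [CF.P]
  | one => show 1 ≤ c.p 0; rw [c.p0]; exact c.ha 0
  | more m ih1 ih2 =>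
    rw [P_rec]
    have := c.ha m
    nlinarith

/-- determinant identity -/
lemma det (m : ℕ) :
    (c.P (m + 1) : ℤ) * Q c m - (c.P m : ℤ) * Q c (m + 1) = (-1) ^ m := by
  induction m with
  | zero => simp [CF.P, Q]
  | succ m ih =>
    have hP' : (c.P (m+2) : ℤ) = c.a m * c.P (m+1) + c.P m := by exact_mod_cast P_rec c m
    have hQ' : (Q c (m+2) : ℤ) = c.a m * Q c (m+1) + Q c m := by exact_mod_cast Q_rec c m
    rw [hP', hQ', pow_succ]
    linear_combination (-1 : ℤ) * ih

/-- products of reciprocals of complete quotients -/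
noncomputable def rr (m : ℕ) : ℝ := ∏ i ∈ Finset.range m, (c.t (i + 1))⁻¹

lemma rr_pos (m : ℕ) : 0 < rr c m := by
  apply Finset.prod_pos
  intro i _
  exact inv_pos.mpr (t_pos c _)

lemma rr_succ (m : ℕ) : rr c (m + 1) = rr c m * (c.t (m + 1))⁻¹ := by
  unfold rr
  exact Finset.prod_range_succ _ _

lemma Dfact (m : ℕ) :
    (c.P (m + 1) : ℝ) - (Q c (m + 1) : ℝ) * α = (-1) ^ m * rr c m := by
  induction m using Nat.twoStepInduction with
  | zero => simp [CF.P, Q, rr]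
  | one =>
    have h0 := c.t_rec 0
    rw [c.t0] at h0
    have ht1 : c.t 1 ≠ 0 := ne_of_gt (t_pos c 1)
    show (c.p 0 : ℝ) - (c.q 0 : ℝ) * α = (-1) ^ 1 * rr c 1
    rw [c.p0, c.q0, rr, Finset.prod_range_one]
    push_cast
    have h1 : (1:ℝ)/c.t 1 = (c.t 1)⁻¹ := one_div _
    linear_combination (-1 : ℝ) * h0
  | more m ih1 ih2 =>
    have hP' : (c.P (m+3) : ℝ) = c.a (m+1) * c.P (m+2) + c.P (m+1) := by
      exact_mod_cast P_rec c (m+1)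
    have hQ' : (Q c (m+3) : ℝ) = c.a (m+1) * Q c (m+2) + Q c (m+1) := by
      exact_mod_cast Q_rec c (m+1)
    have hr1 : rr c (m + 1) = rr c m * (c.t (m + 1))⁻¹ := rr_succ c m
    have hr2 : rr c (m + 2) = rr c (m + 1) * (c.t (m + 2))⁻¹ := rr_succ c (m+1)
    have ht1 : c.t (m + 1) ≠ 0 := ne_of_gt (t_pos c (m+1))
    have ht2 : c.t (m + 2) ≠ 0 := ne_of_gt (t_pos c (m+2))
    have htr := c.t_rec (m + 1)
    have hkey : 1 - (c.a (m+1) : ℝ) * (c.t (m+1))⁻¹ = (c.t (m+1))⁻¹ * (c.t (m+2))⁻¹ := by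
      field_simp at htr ⊢
      linear_combination htr
    have expand : (c.P (m+3) : ℝ) - (Q c (m+3) : ℝ) * α
        = (c.a (m+1) : ℝ) * ((c.P (m+2) : ℝ) - (Q c (m+2) : ℝ) * α)
          + ((c.P (m+1) : ℝ) - (Q c (m+1) : ℝ) * α) := by
      rw [hP', hQ']; ring
    rw [expand, ih2, ih1, hr2, hr1]
    linear_combination ((-1:ℝ)^m * rr c m) * hkey

lemma E_best (hα : 0 < α) (m : ℕ) (z : ℤ) : |E α m| ≤ |(m : ℝ) - z * α| := by
  have h := round_le ((m : ℝ) / α) z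
  have hne : α ≠ 0 := ne_of_gt hα
  have e1 : E α m = α * ((m : ℝ) / α - round ((m : ℝ) / α)) := by
    unfold E; field_simp
  have e2 : (m : ℝ) - z * α = α * ((m : ℝ) / α - z) := by field_simp
  rw [e1, e2, abs_mul, abs_mul]
  exact mul_le_mul_of_nonneg_left h (abs_nonneg α)

end Stmt5Aux

open Stmt5Aux in
/-- Lemma 2: if `|E p| < |E p_{n-1}|` and `p ≤ k * p_{n+1}`, then
`p = i * p_{n-1} + j * p_n` with `i, j ≥ 0` and `i ≤ k`.  Indices are shifted
by two: `c.P (n+1) = p_{n-1}`, `c.P (n+2) = p_n`, `c.P (n+3) = p_{n+1}`. -/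
theorem stmt5 (α : ℝ) (hα : 1 < α) (hirr : Irrational α) (c : CF α) (n : ℕ)
    (p : ℕ) (hp : 0 < p) (k : ℕ) (hk : 0 < k)
    (hE : |E α p| < |E α (c.P (n + 1))|) (hle : p ≤ k * c.P (n + 3)) :
    ∃ i j : ℕ, i ≤ k ∧ p = i * c.P (n + 1) + j * c.P (n + 2) := by
  have hα0 : (0:ℝ) < α := lt_trans one_pos hα
  set q : ℤ := round ((p : ℝ) / α) with hqdef
  have he2 : ((-1:ℤ) ^ (n+1)) * ((-1:ℤ) ^ (n+1)) = 1 := by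
    rw [← pow_add, ← two_mul, pow_mul]
    norm_num
  have hdet : (c.P (n+2) : ℤ) * (Q c (n+1) : ℤ) - (c.P (n+1) : ℤ) * (Q c (n+2) : ℤ)
      = (-1:ℤ) ^ (n+1) := det c (n+1)
  set i : ℤ := ((-1:ℤ)^(n+1)) * (q * (c.P (n+2):ℤ) - (p:ℤ) * (Q c (n+2):ℤ)) with hidef
  set j : ℤ := ((-1:ℤ)^(n+1)) * ((p:ℤ) * (Q c (n+1):ℤ) - q * (c.P (n+1):ℤ)) with hjdef
  have hpij : (p : ℤ) = i * (c.P (n+1):ℤ) + j * (c.P (n+2):ℤ) := by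
    rw [hidef, hjdef]
    linear_combination (-(((-1:ℤ)^(n+1)) * (p:ℤ))) * hdet - (p:ℤ) * he2
  have hqij : q = i * (Q c (n+1):ℤ) + j * (Q c (n+2):ℤ) := by
    rw [hidef, hjdef]
    linear_combination (-(((-1:ℤ)^(n+1)) * q)) * hdet - q * he2
  clear hidef hjdef
  -- real-valued quantities
  have hrnpos : 0 < rr c n := rr_pos c n
  have hrn1pos : 0 < rr c (n+1) := rr_pos c (n+1)
  have htpos : 0 < c.t (n+1) := t_pos c (n+1)
  have hrn_eq : rr c n = c.t (n+1) * rr c (n+1) := by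
    rw [rr_succ c n]
    field_simp
  have hD1 : (c.P (n+1) : ℝ) - (Q c (n+1) : ℝ) * α = (-1)^n * rr c n := Dfact c n
  have hD2 : (c.P (n+2) : ℝ) - (Q c (n+2) : ℝ) * α = (-1)^(n+1) * rr c (n+1) := Dfact c (n+1)
  -- epsilon
  have hpij' : (p : ℝ) = (i : ℝ) * (c.P (n+1) : ℝ) + (j : ℝ) * (c.P (n+2) : ℝ) := by
    exact_mod_cast hpij
  have hqij' : (q : ℝ) = (i : ℝ) * (Q c (n+1) : ℝ) + (j : ℝ) * (Q c (n+2) : ℝ) := by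
    exact_mod_cast hqij
  have heps : E α p = (i : ℝ) * ((-1)^n * rr c n) + (j : ℝ) * ((-1)^(n+1) * rr c (n+1)) := by
    unfold E
    rw [← hqdef, hpij', hqij', ← hD1, ← hD2]
    ring
  -- |E α p| < rr c n
  have hEbound : |E α p| < rr c n := by
    have h1 : |E α (c.P (n+1))| ≤ |((c.P (n+1) : ℝ)) - ((Q c (n+1) : ℤ) : ℝ) * α| :=
      E_best hα0 _ _
    have h2 : |((c.P (n+1) : ℝ)) - ((Q c (n+1) : ℤ) : ℝ) * α| = rr c n := by
      push_cast
      rw [hD1, abs_mul, abs_pow, abs_neg, abs_one, one_pow, one_mul, abs_of_pos hrnpos]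
    calc |E α p| < |E α (c.P (n+1))| := hE
      _ ≤ _ := h1
      _ = rr c n := h2
  have hXeq : |(i : ℝ) * rr c n - (j : ℝ) * rr c (n+1)| < rr c n := by
    have hE2 : E α p = (-1)^n * ((i : ℝ) * rr c n - (j : ℝ) * rr c (n+1)) := by
      rw [heps, pow_succ]; ring
    rw [hE2, abs_mul, abs_pow, abs_neg, abs_one, one_pow, one_mul] at hEbound
    exact hEbound
  have hX1 : (i : ℝ) * rr c n - (j : ℝ) * rr c (n+1) < rr c n :=
    lt_of_le_of_lt (le_abs_self _) hXeq
  have hX2 : -(rr c n) < (i : ℝ) * rr c n - (j : ℝ) * rr c (n+1) :=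
    neg_lt_of_abs_lt hXeq
  -- integer positivity facts
  have hP1nn : (0:ℤ) ≤ (c.P (n+1):ℤ) := by positivity
  have hP2pos : (1:ℤ) ≤ (c.P (n+2):ℤ) := by
    have h := P_pos c (n+1); exact_mod_cast h
  have hP1pos : (1:ℤ) ≤ (c.P (n+1):ℤ) := by
    have h := P_pos c n; exact_mod_cast h
  have hppos : (0:ℤ) < (p:ℤ) := by exact_mod_cast hp
  -- j ≥ 1
  have hj1 : 1 ≤ j := by
    by_contra h
    push_neg at h
    have hj0 : j ≤ 0 := by omega
    have hj0' : (j:ℝ) ≤ 0 := by exact_mod_cast hj0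
    rcases le_or_gt i 0 with hi0 | hi0
    · -- p ≤ 0, contradiction
      have h1 : i * (c.P (n+1):ℤ) ≤ 0 := mul_nonpos_of_nonpos_of_nonneg hi0 hP1nn
      have h2 : j * (c.P (n+2):ℤ) ≤ 0 := mul_nonpos_of_nonpos_of_nonneg hj0 (by linarith)
      omega
    · -- i ≥ 1, X ≥ rn contradiction
      have hi1' : (1:ℝ) ≤ (i:ℝ) := by exact_mod_cast hi0
      have h1 : 0 ≤ ((i:ℝ) - 1) * rr c n := mul_nonneg (by linarith) hrnpos.le
      have h2 : 0 ≤ (-(j:ℝ)) * rr c (n+1) := mul_nonneg (by linarith) hrn1pos.le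
      linarith [hX1]
  have hj1' : (1:ℝ) ≤ (j:ℝ) := by exact_mod_cast hj1
  -- i ≥ 0
  have hi0 : 0 ≤ i := by
    by_contra h
    push_neg at h
    have hi1' : (i:ℝ) ≤ -1 := by exact_mod_cast (by omega : i ≤ -1)
    have h1 : ((i:ℝ) + 1) * rr c n ≤ 0 := mul_nonpos_of_nonpos_of_nonneg (by linarith) hrnpos.le
    have h2 : 0 ≤ ((j:ℝ) - 1) * rr c (n+1) := mul_nonneg (by linarith) hrn1pos.le
    linarith [hX2]
  -- i ≤ k
  have hik : i ≤ k := by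
    by_contra h
    push_neg at h
    have hik1' : (k:ℝ) + 1 ≤ (i:ℝ) := by exact_mod_cast (by omega : (k:ℤ) + 1 ≤ i)
    have hstep : ((i:ℝ) - 1) * rr c n < (j:ℝ) * rr c (n+1) := by linarith
    have hta : (c.a (n+1) : ℝ) < c.t (n+1) := t_gt_a c (n+1)
    have hknn : (0:ℝ) ≤ (k:ℝ) := by positivity
    have hjgt : (k:ℝ) * (c.a (n+1) : ℝ) < (j:ℝ) := by
      have h1 : ((i:ℝ) - 1) * (c.t (n+1) * rr c (n+1)) < (j:ℝ) * rr c (n+1) := by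
        rw [← hrn_eq]; exact hstep
      have h2 : (k:ℝ) * c.t (n+1) ≤ ((i:ℝ) - 1) * c.t (n+1) :=
        mul_le_mul_of_nonneg_right (by linarith) htpos.le
      have h3 : (k:ℝ) * c.t (n+1) * rr c (n+1) ≤ ((i:ℝ) - 1) * c.t (n+1) * rr c (n+1) :=
        mul_le_mul_of_nonneg_right h2 hrn1pos.le
      have h4 : (k:ℝ) * c.t (n+1) * rr c (n+1) < (j:ℝ) * rr c (n+1) := by linarith
      have h5 : (k:ℝ) * c.t (n+1) < (j:ℝ) := lt_of_mul_lt_mul_right (by linarith) hrn1pos.le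
      have h6 : (k:ℝ) * (c.a (n+1) : ℝ) ≤ (k:ℝ) * c.t (n+1) :=
        mul_le_mul_of_nonneg_left hta.le hknn
      linarith
    have hjge : (k:ℤ) * (c.a (n+1)) + 1 ≤ j := by
      have : (k:ℤ) * (c.a (n+1)) < j := by exact_mod_cast hjgt
      omega
    -- contradiction with p ≤ k * P(n+3)
    have hP3 : (c.P (n+3) : ℤ) = (c.a (n+1) : ℤ) * (c.P (n+2):ℤ) + (c.P (n+1):ℤ) := by
      exact_mod_cast P_rec c (n+1)
    have hle' : (p:ℤ) ≤ (k:ℤ) * ((c.a (n+1) : ℤ) * (c.P (n+2):ℤ) + (c.P (n+1):ℤ)) := by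
      rw [← hP3]; exact_mod_cast hle
    have hia : ((k:ℤ)+1) * (c.P (n+1):ℤ) ≤ i * (c.P (n+1):ℤ) :=
      mul_le_mul_of_nonneg_right (by omega) hP1nn
    have hja : ((k:ℤ) * c.a (n+1) + 1) * (c.P (n+2):ℤ) ≤ j * (c.P (n+2):ℤ) :=
      mul_le_mul_of_nonneg_right hjge (by linarith)
    have hsum : ((k:ℤ)+1) * (c.P (n+1):ℤ) + ((k:ℤ) * c.a (n+1) + 1) * (c.P (n+2):ℤ)
        ≤ (k:ℤ) * ((c.a (n+1) : ℤ) * (c.P (n+2):ℤ) + (c.P (n+1):ℤ)) := by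
      calc _ ≤ i * (c.P (n+1):ℤ) + j * (c.P (n+2):ℤ) := add_le_add hia hja
        _ = (p:ℤ) := hpij.symm
        _ ≤ _ := hle'
    have hexp : ((k:ℤ)+1) * (c.P (n+1):ℤ) + ((k:ℤ) * c.a (n+1) + 1) * (c.P (n+2):ℤ)
        = (k:ℤ) * ((c.a (n+1) : ℤ) * (c.P (n+2):ℤ) + (c.P (n+1):ℤ))
          + (c.P (n+1):ℤ) + (c.P (n+2):ℤ) := by ring
    rw [hexp] at hsum
    linarith
  -- conclude
  refine ⟨i.toNat, j.toNat, ?_, ?_⟩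
  · exact_mod_cast (Int.toNat_le.mpr hik)
  · have hi' : (i.toNat : ℤ) = i := Int.toNat_of_nonneg hi0
    have hj' : (j.toNat : ℤ) = j := Int.toNat_of_nonneg (by linarith)
    have hfin : (p : ℤ) = (i.toNat : ℤ) * (c.P (n+1):ℤ) + (j.toNat : ℤ) * (c.P (n+2):ℤ) := by
      rw [hi', hj']; exact hpij
    exact_mod_cast hfin
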